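/- Fix c ∈ ℝ and let Ω = ℝ³ ∖ {(0,0,z) : z ≥ c}. Define on Ω the functions r(x,y,z) = √(x² + y² + (z−c)²), f(x,y,z) = y / (2 r (r − (z−c))) and g(x,y,z) = −x / (2 r (r − (z−c))) (note r − (z−c) > 0 on Ω). Then at every point of Ω the vector field (f, g, 0) satisfies the curl identities: −∂g/∂z = x/(2r³), ∂f/∂z = y/(2r³), and ∂g/∂x − ∂f/∂y = (z−c)/(2r³). -/

import Mathlib

/-- On `Ω = ℝ³ ∖ {(0,0,z) : z ≥ c}`, with `r = √(x² + y² + (z−c)²)`,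
`f = y/(2r(r−(z−c)))` and `g = −x/(2r(r−(z−c)))`, the vector field `(f, g, 0)`
satisfies the curl identities `−∂g/∂z = x/(2r³)`, `∂f/∂z = y/(2r³)` and
`∂g/∂x − ∂f/∂y = (z−c)/(2r³)`, i.e. `dα = −*dV` for the connection 1-form
`α = f dx + g dy` and `V = 1/(2r)`. -/
theorem gibbons_hawking_connection_form_curl
    (c : ℝ) (x y z : ℝ) (h : ¬(x = 0 ∧ y = 0 ∧ c ≤ z))
    (r f g : ℝ → ℝ → ℝ → ℝ)
    (hr : ∀ x y z, r x y z = Real.sqrt (x ^ 2 + y ^ 2 + (z - c) ^ 2))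
    (hf : ∀ x y z, f x y z = y / (2 * r x y z * (r x y z - (z - c))))
    (hg : ∀ x y z, g x y z = -x / (2 * r x y z * (r x y z - (z - c)))) :
    -deriv (fun z' => g x y z') z = x / (2 * r x y z ^ 3) ∧
    deriv (fun z' => f x y z') z = y / (2 * r x y z ^ 3) ∧
    deriv (fun x' => g x' y z) x - deriv (fun y' => f x y' z) y
      = (z - c) / (2 * r x y z ^ 3) := by
  push_neg at h
  have hin : 0 < x ^ 2 + y ^ 2 + (z - c) ^ 2 := by
    rcases eq_or_ne x 0 with hx | hx
    · rcases eq_or_ne y 0 with hy | hy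
      · have hz := h hx hy
        have hzc : z - c ≠ 0 := by intro hc; linarith [hc]
        have : 0 < (z - c) ^ 2 := (sq_nonneg _).lt_of_ne (Ne.symm (pow_ne_zero 2 hzc))
        nlinarith [sq_nonneg x, sq_nonneg y]
      · nlinarith [sq_nonneg x, sq_nonneg (z - c), (sq_nonneg y).lt_of_ne (Ne.symm (pow_ne_zero 2 hy))]
    · nlinarith [sq_nonneg y, sq_nonneg (z - c), (sq_nonneg x).lt_of_ne (Ne.symm (pow_ne_zero 2 hx))]
  have hρ2 : r x y z ^ 2 = x ^ 2 + y ^ 2 + (z - c) ^ 2 := by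
    rw [hr]; exact Real.sq_sqrt hin.le
  have hρpos : 0 < r x y z := by rw [hr]; exact Real.sqrt_pos.mpr hin
  have hρs : z - c < r x y z := by
    rcases eq_or_ne x 0 with hx | hx
    · rcases eq_or_ne y 0 with hy | hy
      · have hz := h hx hy; linarith
      · have : (z - c) ^ 2 < r x y z ^ 2 := by
          rw [hρ2]
          nlinarith [sq_nonneg x, (sq_nonneg y).lt_of_ne (Ne.symm (pow_ne_zero 2 hy))]
        nlinarith
    · have : (z - c) ^ 2 < r x y z ^ 2 := by
        rw [hρ2]
        nlinarith [sq_nonneg y, (sq_nonneg x).lt_of_ne (Ne.symm (pow_ne_zero 2 hx))]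
      nlinarith
  have hρne : r x y z ≠ 0 := ne_of_gt hρpos
  have hρsne : r x y z - (z - c) ≠ 0 := ne_of_gt (by linarith)
  have hDne : 2 * r x y z * (r x y z - (z - c)) ≠ 0 := by
    apply mul_ne_zero (by positivity) hρsne
  -- derivative of r in z
  have hRz : HasDerivAt (fun z' => r x y z') ((z - c) / r x y z) z := by
    have h1 : HasDerivAt (fun z' : ℝ => x ^ 2 + y ^ 2 + (z' - c) ^ 2) (2 * (z - c)) z := by
      have := (((hasDerivAt_id z).sub_const c).pow 2).const_add (x ^ 2 + y ^ 2)
      simpa [mul_comm] using this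
    have h2 := h1.sqrt (ne_of_gt hin)
    have h3 : (fun z' => r x y z') = fun z' => Real.sqrt (x ^ 2 + y ^ 2 + (z' - c) ^ 2) :=
      funext fun z' => hr x y z'
    rw [h3]
    convert h2 using 1
    rw [hr, mul_div_mul_left _ _ (two_ne_zero)]
  have hRx : HasDerivAt (fun x' => r x' y z) (x / r x y z) x := by
    have h1 : HasDerivAt (fun x' : ℝ => x' ^ 2 + y ^ 2 + (z - c) ^ 2) (2 * x) x := by
      have := (((hasDerivAt_id x).pow 2).add_const (y ^ 2)).add_const ((z - c) ^ 2)
      simpa [mul_comm] using this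
    have h2 := h1.sqrt (ne_of_gt hin)
    have h3 : (fun x' => r x' y z) = fun x' => Real.sqrt (x' ^ 2 + y ^ 2 + (z - c) ^ 2) :=
      funext fun x' => hr x' y z
    rw [h3]
    convert h2 using 1
    rw [hr, mul_div_mul_left _ _ (two_ne_zero)]
  have hRy : HasDerivAt (fun y' => r x y' z) (y / r x y z) y := by
    have h1 : HasDerivAt (fun y' : ℝ => x ^ 2 + y' ^ 2 + (z - c) ^ 2) (2 * y) y := by
      have := ((((hasDerivAt_id y).pow 2).const_add (x ^ 2)).add_const ((z - c) ^ 2))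
      simpa [mul_comm] using this
    have h2 := h1.sqrt (ne_of_gt hin)
    have h3 : (fun y' => r x y' z) = fun y' => Real.sqrt (x ^ 2 + y' ^ 2 + (z - c) ^ 2) :=
      funext fun y' => hr x y' z
    rw [h3]
    convert h2 using 1
    rw [hr, mul_div_mul_left _ _ (two_ne_zero)]
  set ρ := r x y z with hρdef
  -- denominators
  have hDz : HasDerivAt (fun z' => 2 * r x y z' * (r x y z' - (z' - c)))
      (2 * ((z - c) / ρ) * (ρ - (z - c)) + 2 * ρ * ((z - c) / ρ - 1)) z := by
    exact (hRz.const_mul 2).mul (hRz.sub ((hasDerivAt_id z).sub_const c))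
  have hDx : HasDerivAt (fun x' => 2 * r x' y z * (r x' y z - (z - c)))
      (2 * (x / ρ) * (ρ - (z - c)) + 2 * ρ * (x / ρ)) x := by
    exact (hRx.const_mul 2).mul (hRx.sub_const (z - c))
  have hDy : HasDerivAt (fun y' => 2 * r x y' z * (r x y' z - (z - c)))
      (2 * (y / ρ) * (ρ - (z - c)) + 2 * ρ * (y / ρ)) y := by
    exact (hRy.const_mul 2).mul (hRy.sub_const (z - c))
  -- the four partial derivatives
  have hgz : deriv (fun z' => g x y z') z =
      (0 * (2 * ρ * (ρ - (z - c))) - (-x) * (2 * ((z - c) / ρ) * (ρ - (z - c)) + 2 * ρ * ((z - c) / ρ - 1))) /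
        (2 * ρ * (ρ - (z - c))) ^ 2 := by
    have h3 : (fun z' => g x y z') = fun z' => -x / (2 * r x y z' * (r x y z' - (z' - c))) :=
      funext fun z' => hg x y z'
    rw [h3]
    exact (((hasDerivAt_const z (-x)).div hDz hDne)).deriv
  have hfz : deriv (fun z' => f x y z') z =
      (0 * (2 * ρ * (ρ - (z - c))) - y * (2 * ((z - c) / ρ) * (ρ - (z - c)) + 2 * ρ * ((z - c) / ρ - 1))) /
        (2 * ρ * (ρ - (z - c))) ^ 2 := by
    have h3 : (fun z' => f x y z') = fun z' => y / (2 * r x y z' * (r x y z' - (z' - c))) :=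
      funext fun z' => hf x y z'
    rw [h3]
    exact (((hasDerivAt_const z y).div hDz hDne)).deriv
  have hgx : deriv (fun x' => g x' y z) x =
      ((-1) * (2 * ρ * (ρ - (z - c))) - (-x) * (2 * (x / ρ) * (ρ - (z - c)) + 2 * ρ * (x / ρ))) /
        (2 * ρ * (ρ - (z - c))) ^ 2 := by
    have h3 : (fun x' => g x' y z) = fun x' => -x' / (2 * r x' y z * (r x' y z - (z - c))) :=
      funext fun x' => hg x' y z
    rw [h3]
    exact (((hasDerivAt_id x).neg.div hDx hDne)).deriv
  have hfy : deriv (fun y' => f x y' z) y =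
      (1 * (2 * ρ * (ρ - (z - c))) - y * (2 * (y / ρ) * (ρ - (z - c)) + 2 * ρ * (y / ρ))) /
        (2 * ρ * (ρ - (z - c))) ^ 2 := by
    have h3 : (fun y' => f x y' z) = fun y' => y' / (2 * r x y' z * (r x y' z - (z - c))) :=
      funext fun y' => hf x y' z
    rw [h3]
    exact (((hasDerivAt_id y).div hDy hDne)).deriv
  refine ⟨?_, ?_, ?_⟩
  · rw [hgz]; field_simp; ring
  · rw [hfz]; field_simp; ring
  · rw [hgx, hfy]; field_simp; linear_combination (z - c - 2 * ρ) * hρ2
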